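/- Let a, b, c be odd integers and let M = M(a,b,c) be the matrix with rows (2a, b, c, -2), (b, 2, 0, 0), (c, 0, -2, 0), (-2, 0, 0, 0), with rational inverse N = M⁻¹. Then there exist u, v ∈ ℤ⁴ such that: the classes of u and v generate the quotient group ℤ⁴/Mℤ⁴ (which has order 16), both classes have order 4, and the rational numbers uᵀNu, vᵀNv, uᵀNv satisfy uᵀNu - 1/2 ∈ 2ℤ, vᵀNv - 1/2 ∈ 2ℤ, and uᵀNv - 3/4 ∈ ℤ. -/
import Mathlib


open Matrix

/-- The Gram matrix of the algebraic part of the twisted Mukai lattice,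
with respect to the basis `(2e₀+2B, h, s, e₄)`. -/
def GramM (a b c : ℤ) : Matrix (Fin 4) (Fin 4) ℤ :=
  !![2*a,  b,  c, -2;
       b,  2,  0,  0;
       c,  0, -2,  0;
      -2,  0,  0,  0]

/-- The rational inverse `N = M(a,b,c)⁻¹`. -/
noncomputable def NMat (a b c : ℤ) : Matrix (Fin 4) (Fin 4) ℚ :=
  ((GramM a b c).map (Int.cast : ℤ → ℚ))⁻¹

/-- The rational number `uᵀ N v` for integer vectors `u, v`. -/
noncomputable def pairN (a b c : ℤ) (u v : Fin 4 → ℤ) : ℚ :=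
  (fun i => (u i : ℚ)) ⬝ᵥ (NMat a b c).mulVec (fun i => (v i : ℚ))

/-- The discriminant group `ℤ⁴ / M(a,b,c) ℤ⁴`. -/
abbrev Coker (a b c : ℤ) :=
  (Fin 4 → ℤ) ⧸ LinearMap.range (GramM a b c).mulVecLin

/-! ### Auxiliary data -/

/-- First generator `u = e₁`. -/
def uVec : Fin 4 → ℤ := ![0, 1, 0, 0]

/-- Second generator `v`. -/
def vVec (A B C : ℤ) : Fin 4 → ℤ :=
  ![(2*B+1)*(B+1) - (2*C+1)*(C+1) - A - 1, B+1, C+1, 1]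

lemma NMat_eq (A B C : ℤ) :
    NMat (2*A+1) (2*B+1) (2*C+1) =
    !![0, 0, 0, -1/2;
       0, 1/2, 0, (2*(B:ℚ)+1)/4;
       0, 0, -1/2, -(2*(C:ℚ)+1)/4;
       -1/2, (2*(B:ℚ)+1)/4, -(2*(C:ℚ)+1)/4,
         ((2*(B:ℚ)+1)^2 - (2*(C:ℚ)+1)^2 - 4*(2*(A:ℚ)+1))/8] := by
  apply Matrix.inv_eq_right_inv
  ext i j
  fin_cases i <;> fin_cases j <;>
    simp [GramM, Matrix.mul_apply, Fin.sum_univ_four, Matrix.map_apply] <;>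
    ring

lemma pair_uu (A B C : ℤ) :
    pairN (2*A+1) (2*B+1) (2*C+1) uVec uVec = 1/2 := by
  simp [pairN, NMat_eq, uVec, Matrix.mulVec, dotProduct, Fin.sum_univ_four]

lemma pair_vv (A B C : ℤ) :
    pairN (2*A+1) (2*B+1) (2*C+1) (vVec A B C) (vVec A B C) = 1/2 := by
  simp [pairN, NMat_eq, vVec, Matrix.mulVec, dotProduct, Fin.sum_univ_four]
  push_cast
  ring

lemma pair_uv (A B C : ℤ) :
    pairN (2*A+1) (2*B+1) (2*C+1) uVec (vVec A B C) = (4*(B:ℚ)+3)/4 := by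
  simp [pairN, NMat_eq, uVec, vVec, Matrix.mulVec, dotProduct, Fin.sum_univ_four]
  push_cast
  ring

lemma mem_4u (A B C : ℤ) :
    (4:ℤ) • uVec ∈ LinearMap.range (GramM (2*A+1) (2*B+1) (2*C+1)).mulVecLin := by
  refine ⟨![0, 2, 0, 2*B+1], ?_⟩
  funext i
  fin_cases i <;>
    simp [GramM, uVec, Matrix.mulVecLin_apply, Matrix.mulVec, dotProduct,
      Fin.sum_univ_four] <;> ring

lemma mem_4v (A B C : ℤ) :
    (4:ℤ) • vVec A B C ∈
      LinearMap.range (GramM (2*A+1) (2*B+1) (2*C+1)).mulVecLin := by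
  refine ⟨![-2, 4*B+3, -(4*C+3), C-B-2*A], ?_⟩
  funext i
  fin_cases i <;>
    simp [GramM, vVec, Matrix.mulVecLin_apply, Matrix.mulVec, dotProduct,
      Fin.sum_univ_four] <;> ring

lemma mem_e0 (A B C : ℤ) :
    (![1,0,0,0] - (2:ℤ) • uVec) ∈
      LinearMap.range (GramM (2*A+1) (2*B+1) (2*C+1)).mulVecLin := by
  refine ⟨![0, -1, 0, -(B+1)], ?_⟩
  funext i
  fin_cases i <;>
    simp [GramM, uVec, Matrix.mulVecLin_apply, Matrix.mulVec, dotProduct,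
      Fin.sum_univ_four] <;> ring

lemma mem_e2 (A B C : ℤ) :
    (![0,0,1,0] - (3:ℤ) • uVec - (2:ℤ) • vVec A B C) ∈
      LinearMap.range (GramM (2*A+1) (2*B+1) (2*C+1)).mulVecLin := by
  refine ⟨![1, -(2*B+3), 2*C+1, A-B-C-1], ?_⟩
  funext i
  fin_cases i <;>
    simp [GramM, uVec, vVec, Matrix.mulVecLin_apply, Matrix.mulVec, dotProduct,
      Fin.sum_univ_four] <;> ring

/-- The linear map giving the two invariants mod 4 (the rows `4uᵀN` and `4vᵀN`). -/
def fMap (A B C : ℤ) : (Fin 4 → ℤ) →ₗ[ℤ] ZMod 4 × ZMod 4 where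
  toFun t :=
    (((2*t 1 + (2*B+1)*t 3 : ℤ) : ZMod 4),
     (((-2)*t 0 + (4*B+3)*t 1 - (4*C+3)*t 2 + (C-B-2*A)*t 3 : ℤ) : ZMod 4))
  map_add' x y := by
    simp only [Pi.add_apply, Prod.mk_add_mk, Prod.mk.injEq]
    constructor <;> push_cast <;> ring
  map_smul' m x := by
    simp only [Pi.smul_apply, smul_eq_mul, RingHom.id_apply, Prod.smul_mk, zsmul_eq_mul,
      Prod.mk.injEq]
    constructor <;> push_cast <;> ring

lemma fMap_ker (A B C : ℤ) :
    LinearMap.range (GramM (2*A+1) (2*B+1) (2*C+1)).mulVecLin ≤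
      LinearMap.ker (fMap A B C) := by
  rintro t ⟨w, rfl⟩
  have h0 : (GramM (2*A+1) (2*B+1) (2*C+1)).mulVecLin w 0
      = (2*(2*A+1))*w 0 + (2*B+1)*w 1 + (2*C+1)*w 2 - 2*w 3 := by
    simp [GramM, Matrix.mulVecLin_apply, Matrix.mulVec, dotProduct, Fin.sum_univ_four]; ring
  have h1 : (GramM (2*A+1) (2*B+1) (2*C+1)).mulVecLin w 1 = (2*B+1)*w 0 + 2*w 1 := by
    simp [GramM, Matrix.mulVecLin_apply, Matrix.mulVec, dotProduct, Fin.sum_univ_four]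
  have h2 : (GramM (2*A+1) (2*B+1) (2*C+1)).mulVecLin w 2 = (2*C+1)*w 0 - 2*w 2 := by
    simp [GramM, Matrix.mulVecLin_apply, Matrix.mulVec, dotProduct, Fin.sum_univ_four]; ring
  have h3 : (GramM (2*A+1) (2*B+1) (2*C+1)).mulVecLin w 3 = -2*w 0 := by
    simp [GramM, Matrix.mulVecLin_apply, Matrix.mulVec, dotProduct, Fin.sum_univ_four]
  simp only [LinearMap.mem_ker, fMap, LinearMap.coe_mk, AddHom.coe_mk, h0, h1, h2, h3,
    Prod.mk_eq_zero]
  constructor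
  · rw [ZMod.intCast_zmod_eq_zero_iff_dvd]
    exact ⟨w 1, by ring⟩
  · rw [ZMod.intCast_zmod_eq_zero_iff_dvd]
    exact ⟨((2*B+1)*(B+1) - (2*C+1)*(C+1) - A - 1)*w 0 + (B+1)*w 1 + (C+1)*w 2 + w 3,
      by ring⟩

lemma intCast_lin (m k : ℤ) : ((4*m + k : ℤ) : ZMod 4) = (k : ZMod 4) := by
  push_cast
  have : ((4:ℤ) : ZMod 4) = 0 := by decide
  push_cast at this
  rw [this]
  ring

lemma dvd_four_eq {d : ℕ} (h1 : d ∣ 4) (h2 : ¬ d ∣ 2) : d = 4 := by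
  have hle : d ≤ 4 := Nat.le_of_dvd (by norm_num) h1
  interval_cases d <;> revert h1 h2 <;> decide

lemma zsmul_reduce {G : Type*} [AddCommGroup G] (x : G) (hx : (4:ℤ) • x = 0) (m : ℤ) :
    m • x = ((m : ZMod 4)).val • x := by
  conv_lhs => rw [show m = 4 * (m / 4) + m % 4 from (Int.mul_ediv_add_emod m 4).symm]
  rw [add_smul, mul_comm, mul_smul, hx, smul_zero, zero_add]
  have hval : (((m : ZMod 4)).val : ℤ) = m % 4 := ZMod.val_intCast m
  rw [← hval, natCast_zsmul]

theorem discriminant_form_GramM (a b c : ℤ) (ha : Odd a) (hb : Odd b) (hc : Odd c) :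
    ∃ u v : Fin 4 → ℤ,
      AddSubgroup.closure
          {(Submodule.Quotient.mk u : Coker a b c), (Submodule.Quotient.mk v : Coker a b c)}
        = ⊤ ∧
      Nat.card (Coker a b c) = 16 ∧
      addOrderOf (Submodule.Quotient.mk u : Coker a b c) = 4 ∧
      addOrderOf (Submodule.Quotient.mk v : Coker a b c) = 4 ∧
      (∃ k : ℤ, pairN a b c u u - 1/2 = 2 * k) ∧
      (∃ k : ℤ, pairN a b c v v - 1/2 = 2 * k) ∧
      (∃ k : ℤ, pairN a b c u v - 3/4 = k) := by
  obtain ⟨A, rfl⟩ := ha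
  obtain ⟨B, rfl⟩ := hb
  obtain ⟨C, rfl⟩ := hc
  -- abbreviations
  set mkU : Coker (2*A+1) (2*B+1) (2*C+1) := Submodule.Quotient.mk uVec with hmkU
  set mkV : Coker (2*A+1) (2*B+1) (2*C+1) := Submodule.Quotient.mk (vVec A B C) with hmkV
  -- torsion relations
  have h4u : (4:ℤ) • mkU = 0 := by
    rw [hmkU, ← Submodule.Quotient.mk_smul, Submodule.Quotient.mk_eq_zero]
    exact mem_4u A B C
  have h4v : (4:ℤ) • mkV = 0 := by
    rw [hmkV, ← Submodule.Quotient.mk_smul, Submodule.Quotient.mk_eq_zero]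
    exact mem_4v A B C
  have h4uN : (4:ℕ) • mkU = 0 := by
    have := h4u; rwa [show ((4:ℤ)) = ((4:ℕ) : ℤ) by norm_num, natCast_zsmul] at this
  have h4vN : (4:ℕ) • mkV = 0 := by
    have := h4v; rwa [show ((4:ℤ)) = ((4:ℕ) : ℤ) by norm_num, natCast_zsmul] at this
  -- the invariant map
  let φ : Coker (2*A+1) (2*B+1) (2*C+1) →ₗ[ℤ] ZMod 4 × ZMod 4 :=
    Submodule.liftQ _ (fMap A B C) (fMap_ker A B C)
  have hφmk : ∀ t : Fin 4 → ℤ,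
      φ (Submodule.Quotient.mk t) = fMap A B C t := fun t => rfl
  have hφu : φ mkU = ((2 : ZMod 4), (3 : ZMod 4)) := by
    rw [hmkU, hφmk]
    simp only [fMap, LinearMap.coe_mk, AddHom.coe_mk, uVec]
    simp only [Matrix.cons_val_zero, Matrix.cons_val_one, Matrix.head_cons,
      Matrix.cons_val_fin_one, Matrix.cons_val_two, Matrix.tail_cons, Matrix.cons_val_three]
    have h1 : ((2*1 + (2*B+1)*0 : ℤ) : ZMod 4) = 2 := by norm_num
    have h2 : ((-2*0 + (4*B+3)*1 - (4*C+3)*0 + (C-B-2*A)*0 : ℤ) : ZMod 4) = 3 := by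
      rw [show (-2*0 + (4*B+3)*1 - (4*C+3)*0 + (C-B-2*A)*0 : ℤ) = 4*B + 3 by ring,
        intCast_lin]
      norm_num
    rw [h1, h2]
  have hφv : φ mkV = ((3 : ZMod 4), (2 : ZMod 4)) := by
    rw [hmkV, hφmk]
    simp only [fMap, LinearMap.coe_mk, AddHom.coe_mk, vVec]
    simp only [Matrix.cons_val_zero, Matrix.cons_val_one, Matrix.head_cons,
      Matrix.cons_val_fin_one, Matrix.cons_val_two, Matrix.tail_cons, Matrix.cons_val_three]
    have h1 : ((2*(B+1) + (2*B+1)*1 : ℤ) : ZMod 4) = 3 := by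
      rw [show (2*(B+1) + (2*B+1)*1 : ℤ) = 4*B + 3 by ring, intCast_lin]
      norm_num
    have h2 : (((-2)*((2*B+1)*(B+1) - (2*C+1)*(C+1) - A - 1) + (4*B+3)*(B+1)
        - (4*C+3)*(C+1) + (C-B-2*A)*1 : ℤ) : ZMod 4) = 2 := by
      rw [show ((-2)*((2*B+1)*(B+1) - (2*C+1)*(C+1) - A - 1) + (4*B+3)*(B+1)
        - (4*C+3)*(C+1) + (C-B-2*A)*1 : ℤ) = 2 by ring]
      norm_num
    rw [h1, h2]
  -- generation of the cokernel
  have hU : mkU ∈ AddSubgroup.closure {mkU, mkV} :=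
    AddSubgroup.subset_closure (Set.mem_insert _ _)
  have hV : mkV ∈ AddSubgroup.closure {mkU, mkV} :=
    AddSubgroup.subset_closure (Set.mem_insert_iff.mpr (Or.inr rfl))
  have hmkE0 : (Submodule.Quotient.mk ![1,0,0,0] : Coker (2*A+1) (2*B+1) (2*C+1))
      = (2:ℤ) • mkU := by
    have h := (Submodule.Quotient.mk_eq_zero _).2 (mem_e0 A B C)
    have h' : (Submodule.Quotient.mk ![1,0,0,0] : Coker (2*A+1) (2*B+1) (2*C+1))
        - (2:ℤ) • mkU = 0 := by
      rw [hmkU, ← Submodule.Quotient.mk_smul, ← Submodule.Quotient.mk_sub]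
      exact h
    exact sub_eq_zero.mp h'
  have hmkE2 : (Submodule.Quotient.mk ![0,0,1,0] : Coker (2*A+1) (2*B+1) (2*C+1))
      = (3:ℤ) • mkU + (2:ℤ) • mkV := by
    have h := (Submodule.Quotient.mk_eq_zero _).2 (mem_e2 A B C)
    have h' : (Submodule.Quotient.mk ![0,0,1,0] : Coker (2*A+1) (2*B+1) (2*C+1))
        - ((3:ℤ) • mkU + (2:ℤ) • mkV) = 0 := by
      rw [hmkU, hmkV, ← Submodule.Quotient.mk_smul, ← Submodule.Quotient.mk_smul,
        ← Submodule.Quotient.mk_add, ← Submodule.Quotient.mk_sub, sub_add_eq_sub_sub]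
      exact h
    exact sub_eq_zero.mp h'
  have hE0 : (Submodule.Quotient.mk ![1,0,0,0] : Coker (2*A+1) (2*B+1) (2*C+1))
      ∈ AddSubgroup.closure {mkU, mkV} := by
    rw [hmkE0]; exact AddSubgroup.zsmul_mem _ hU 2
  have hE2 : (Submodule.Quotient.mk ![0,0,1,0] : Coker (2*A+1) (2*B+1) (2*C+1))
      ∈ AddSubgroup.closure {mkU, mkV} := by
    rw [hmkE2]
    exact add_mem (AddSubgroup.zsmul_mem _ hU 3) (AddSubgroup.zsmul_mem _ hV 2)
  have hvdec : vVec A B C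
      = ((2*B+1)*(B+1) - (2*C+1)*(C+1) - A - 1) • ![1,0,0,0] + (B+1) • uVec
        + (C+1) • ![0,0,1,0] + ![0,0,0,1] := by
    funext j
    fin_cases j <;> simp [uVec, vVec] <;> ring
  have hmkE3 : (Submodule.Quotient.mk ![0,0,0,1] : Coker (2*A+1) (2*B+1) (2*C+1))
      = mkV - ((2*B+1)*(B+1) - (2*C+1)*(C+1) - A - 1) • Submodule.Quotient.mk ![1,0,0,0]
        - (B+1) • mkU - (C+1) • Submodule.Quotient.mk ![0,0,1,0] := by
    have h5 : mkV = ((2*B+1)*(B+1) - (2*C+1)*(C+1) - A - 1)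
          • (Submodule.Quotient.mk ![1,0,0,0] : Coker (2*A+1) (2*B+1) (2*C+1))
        + (B+1) • mkU
        + (C+1) • (Submodule.Quotient.mk ![0,0,1,0] : Coker (2*A+1) (2*B+1) (2*C+1))
        + Submodule.Quotient.mk ![0,0,0,1] := by
      rw [hmkU, hmkV, ← Submodule.Quotient.mk_smul, ← Submodule.Quotient.mk_smul,
        ← Submodule.Quotient.mk_smul, ← Submodule.Quotient.mk_add,
        ← Submodule.Quotient.mk_add, ← Submodule.Quotient.mk_add]
      exact congrArg _ hvdec
    rw [h5]; abel
  have hE3 : (Submodule.Quotient.mk ![0,0,0,1] : Coker (2*A+1) (2*B+1) (2*C+1))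
      ∈ AddSubgroup.closure {mkU, mkV} := by
    rw [hmkE3]
    exact sub_mem (sub_mem (sub_mem hV (AddSubgroup.zsmul_mem _ hE0 _))
      (AddSubgroup.zsmul_mem _ hU _)) (AddSubgroup.zsmul_mem _ hE2 _)
  have htop : AddSubgroup.closure {mkU, mkV} = ⊤ := by
    rw [eq_top_iff]
    rintro q -
    obtain ⟨t, rfl⟩ := Submodule.Quotient.mk_surjective _ q
    have hdec : (Submodule.Quotient.mk t : Coker (2*A+1) (2*B+1) (2*C+1))
        = t 0 • Submodule.Quotient.mk ![1,0,0,0] + t 1 • mkU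
          + t 2 • Submodule.Quotient.mk ![0,0,1,0]
          + t 3 • Submodule.Quotient.mk ![0,0,0,1] := by
      rw [hmkU, ← Submodule.Quotient.mk_smul, ← Submodule.Quotient.mk_smul,
        ← Submodule.Quotient.mk_smul, ← Submodule.Quotient.mk_smul,
        ← Submodule.Quotient.mk_add, ← Submodule.Quotient.mk_add,
        ← Submodule.Quotient.mk_add]
      refine congrArg _ ?_
      funext j
      fin_cases j <;> simp [uVec] <;> ring
    rw [hdec]
    exact add_mem (add_mem (add_mem (AddSubgroup.zsmul_mem _ hE0 _)
      (AddSubgroup.zsmul_mem _ hU _)) (AddSubgroup.zsmul_mem _ hE2 _))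
      (AddSubgroup.zsmul_mem _ hE3 _)
  -- cardinality
  have hφsurj : Function.Surjective φ := by
    intro p
    refine ⟨(p.1.val) • ((2:ℕ) • mkU + (3:ℕ) • mkV)
      + (p.2.val) • ((3:ℕ) • mkU + (2:ℕ) • mkV), ?_⟩
    have e1 : φ ((2:ℕ) • mkU + (3:ℕ) • mkV) = ((1 : ZMod 4), (0 : ZMod 4)) := by
      rw [map_add, map_nsmul, map_nsmul, hφu, hφv]; decide
    have e2 : φ ((3:ℕ) • mkU + (2:ℕ) • mkV) = ((0 : ZMod 4), (1 : ZMod 4)) := by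
      rw [map_add, map_nsmul, map_nsmul, hφu, hφv]; decide
    rw [map_add, map_nsmul, map_nsmul, e1, e2]
    exact (by decide : ∀ (p : ZMod 4 × ZMod 4),
      p.1.val • ((1:ZMod 4),(0:ZMod 4)) + p.2.val • ((0:ZMod 4),(1:ZMod 4)) = p) p
  have hg : Function.Surjective
      (fun p : ZMod 4 × ZMod 4 => p.1.val • mkU + p.2.val • mkV) := by
    intro q
    have hq : q ∈ AddSubgroup.closure {mkU, mkV} := htop ▸ AddSubgroup.mem_top q
    rw [AddSubgroup.mem_closure_pair] at hq
    obtain ⟨m, n, hmn⟩ := hq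
    refine ⟨((m : ZMod 4), (n : ZMod 4)), ?_⟩
    show ((m : ZMod 4)).val • mkU + ((n : ZMod 4)).val • mkV = q
    rw [← zsmul_reduce _ h4u m, ← zsmul_reduce _ h4v n]
    exact hmn
  have hfin : Finite (Coker (2*A+1) (2*B+1) (2*C+1)) := Finite.of_surjective _ hg
  have hcard1 : Nat.card (Coker (2*A+1) (2*B+1) (2*C+1)) ≤ 16 := by
    have := Nat.card_le_card_of_surjective _ hg
    simpa [Nat.card_eq_fintype_card] using this
  have hcard2 : 16 ≤ Nat.card (Coker (2*A+1) (2*B+1) (2*C+1)) := by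
    have := Nat.card_le_card_of_surjective φ hφsurj
    simpa [Nat.card_eq_fintype_card] using this
  -- orders
  have hordU : addOrderOf mkU = 4 := by
    apply dvd_four_eq (addOrderOf_dvd_of_nsmul_eq_zero h4uN)
    intro hdvd
    have h2 : (2:ℕ) • mkU = 0 := addOrderOf_dvd_iff_nsmul_eq_zero.mp hdvd
    have h3 := congrArg φ h2
    rw [map_nsmul, hφu, map_zero] at h3
    exact (by decide : ¬ ((2:ℕ) • ((2:ZMod 4), (3:ZMod 4)) = 0)) h3
  have hordV : addOrderOf mkV = 4 := by
    apply dvd_four_eq (addOrderOf_dvd_of_nsmul_eq_zero h4vN)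
    intro hdvd
    have h2 : (2:ℕ) • mkV = 0 := addOrderOf_dvd_iff_nsmul_eq_zero.mp hdvd
    have h3 := congrArg φ h2
    rw [map_nsmul, hφv, map_zero] at h3
    exact (by decide : ¬ ((2:ℕ) • ((3:ZMod 4), (2:ZMod 4)) = 0)) h3
  exact ⟨uVec, vVec A B C, htop, le_antisymm hcard1 hcard2, hordU, hordV,
    ⟨0, by rw [pair_uu]; ring⟩, ⟨0, by rw [pair_vv]; ring⟩,
    ⟨B, by rw [pair_uv]; push_cast; ring⟩⟩
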